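/- A finite rack (X, ◃) is injective (the natural map X → G_{(X,◃)} to its structure group is injective) if and only if (X, ◃) is isomorphic to a subquandle of a conjugation quandle of a finite group, if and only if it is isomorphic to a subquandle of a conjugation quandle of any group. -/

import Mathlib

/-- The defining relations of the structure group of a rack:
`x y = y (x ◃ y)` for all `x, y`. -/
def rackRels {X : Type*} (op : X → X → X) : Set (FreeGroup X) :=
  {w | ∃ x y, w = FreeGroup.of x * FreeGroup.of y *
    (FreeGroup.of y * FreeGroup.of (op x y))⁻¹}

/-- The structure group of a rack `(X, ◃)`. -/
abbrev RackGroup {X : Type*} (op : X → X → X) : Type _ :=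
  PresentedGroup (rackRels op)

/-- Residual finiteness of finitely generated abelian groups. -/
lemma resid {A : Type*} [AddCommGroup A] [Module.Finite ℤ A] (a : A) (ha : a ≠ 0) :
    ∃ B : Submodule ℤ A, Finite (A ⧸ B) ∧ a ∉ B := by
  have hquot : ∀ m : ℕ, m ≠ 0 →
      Finite (A ⧸ LinearMap.range ((m : ℤ) • (LinearMap.id : A →ₗ[ℤ] A))) := by
    intro m hm
    set B := LinearMap.range ((m : ℤ) • (LinearMap.id : A →ₗ[ℤ] A))
    have hfg : AddGroup.FG (A ⧸ B) := Module.Finite.iff_addGroup_fg.mp inferInstance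
    refine AddCommGroup.finite_of_fg_torsion _ ?_
    intro x
    rw [isOfFinAddOrder_iff_nsmul_eq_zero]
    refine ⟨m, Nat.pos_of_ne_zero hm, ?_⟩
    obtain ⟨y, rfl⟩ := Submodule.Quotient.mk_surjective B x
    have h2 : ((m : ℤ)) • Submodule.Quotient.mk y = (0 : A ⧸ B) := by
      rw [← Submodule.Quotient.mk_smul]
      exact (Submodule.Quotient.mk_eq_zero B).mpr ⟨y, by simp⟩
    simpa using h2
  set T := Submodule.torsion ℤ A with hT
  by_cases haT : a ∈ T
  · -- torsion case
    have hTfg : Module.Finite ℤ ↥T := Module.Finite.iff_fg.mpr (IsNoetherian.noetherian T)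
    have hTfin : Finite ↥T := by
      haveI : AddGroup.FG ↥T := Module.Finite.iff_addGroup_fg.mp hTfg
      refine AddCommGroup.finite_of_fg_torsion _ (fun x => ?_)
      obtain ⟨⟨r, hr⟩, hrx⟩ := x.2
      rw [isOfFinAddOrder_iff_nsmul_eq_zero]
      refine ⟨r.natAbs, ?_, ?_⟩
      · have : r ≠ 0 := nonZeroDivisors.coe_ne_zero ⟨r, hr⟩
        exact Int.natAbs_pos.mpr this
      · have hrx' : r • (x : A) = 0 := hrx
        have h4 : (r.natAbs : ℤ) • (x : A) = 0 := by
          rcases Int.natAbs_eq r with h | h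
          · rw [← h]; exact hrx'
          · rw [show ((r.natAbs : ℤ)) = -r by omega, neg_smul, hrx', neg_zero]
        refine Subtype.ext ?_
        have h5 : r.natAbs • (x : A) = 0 := by simpa using h4
        simpa using h5
    set e := AddMonoid.exponent ↥T with he
    have he0 : e ≠ 0 := AddMonoid.exponent_ne_zero_of_finite
    refine ⟨LinearMap.range (((e * e : ℕ) : ℤ) • (LinearMap.id : A →ₗ[ℤ] A)),
      hquot _ (by positivity), ?_⟩
    rintro ⟨y, hy⟩
    simp only [LinearMap.smul_apply, LinearMap.id_apply] at hy
    -- hy : ((e*e : ℕ) : ℤ) • y = a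
    have hyT : y ∈ T := by
      have h0 : Submodule.Quotient.mk (p := T) a = 0 := (Submodule.Quotient.mk_eq_zero T).mpr haT
      have : ((e * e : ℕ) : ℤ) • Submodule.Quotient.mk (p := T) y = 0 := by
        rw [← Submodule.Quotient.mk_smul, hy, h0]
      have hne : ((e * e : ℕ) : ℤ) ≠ 0 := by positivity
      have := smul_eq_zero.mp this
      rcases this with h | h
      · exact absurd h hne
      · exact (Submodule.Quotient.mk_eq_zero T).mp h
    have hey : (e : ℤ) • y = 0 := by
      have := AddMonoid.exponent_nsmul_eq_zero (⟨y, hyT⟩ : ↥T)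
      have h2 : e • y = 0 := by
        have := congrArg (Subtype.val) this
        simpa using this
      simpa using h2
    apply ha
    rw [← hy]
    have : ((e * e : ℕ) : ℤ) • y = (e : ℤ) • ((e : ℤ) • y) := by
      push_cast
      rw [mul_smul]
    rw [this, hey, smul_zero]
  · -- free part case
    have hmk : Submodule.Quotient.mk (p := T) a ≠ 0 :=
      fun h => haT ((Submodule.Quotient.mk_eq_zero T).mp h)
    set F := A ⧸ T
    have : Module.Free ℤ F := inferInstance
    set b := Module.Free.chooseBasis ℤ F with hb
    have hrepr : b.repr (Submodule.Quotient.mk a) ≠ 0 := by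
      intro h
      apply hmk
      have := b.repr.injective (a₁ := Submodule.Quotient.mk a) (a₂ := 0) (by simp [h])
      exact this
    obtain ⟨i, hi⟩ : ∃ i, b.repr (Submodule.Quotient.mk a) i ≠ 0 := by
      by_contra h
      push_neg at h
      exact hrepr (Finsupp.ext h)
    set c := b.repr (Submodule.Quotient.mk a) i with hc
    set m := c.natAbs + 1 with hm
    refine ⟨LinearMap.range (((m : ℕ) : ℤ) • (LinearMap.id : A →ₗ[ℤ] A)),
      hquot _ (by positivity), ?_⟩
    rintro ⟨y, hy⟩
    simp only [LinearMap.smul_apply, LinearMap.id_apply] at hy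
    have : c = (m : ℤ) * (b.repr (Submodule.Quotient.mk y) i) := by
      rw [hc, ← hy, Submodule.Quotient.mk_smul, map_smul]
      simp [mul_comm]
    have hdvd : (m : ℤ) ∣ c := ⟨_, this⟩
    have : m ∣ c.natAbs := Int.natAbs_dvd_natAbs.mpr (by simpa using hdvd)
    have := Nat.le_of_dvd (Int.natAbs_pos.mpr hi) this
    omega


/-- A finite rack is injective (the natural map to its structure group is
injective) iff it embeds as a subquandle of the conjugation quandle of a finite
group, iff it embeds as a subquandle of the conjugation quandle of any group. -/
theorem rack_injective_iff_conj_subquandle {X : Type*} [Fintype X] (op : X → X → X)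
    (hsd : ∀ x y z, op (op x y) z = op (op x z) (op y z))
    (hbij : ∀ y, Function.Bijective (fun x => op x y)) :
    (Function.Injective (fun x : X => (PresentedGroup.of x : RackGroup op)) ↔
        ∃ (H : Type) (_ : Group H) (_ : Finite H) (f : X → H),
          Function.Injective f ∧ ∀ x y, f (op x y) = (f y)⁻¹ * f x * f y) ∧
      (Function.Injective (fun x : X => (PresentedGroup.of x : RackGroup op)) ↔
        ∃ (H : Type) (_ : Group H) (f : X → H),
          Function.Injective f ∧ ∀ x y, f (op x y) = (f y)⁻¹ * f x * f y) := by
  classical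
  set ι : X → RackGroup op := fun x => (PresentedGroup.of x : RackGroup op) with hι
  -- the rack relation in the structure group
  have hrel : ∀ x y, ι x * ι y = ι y * ι (op x y) := by
    intro x y
    have h1 : PresentedGroup.mk (rackRels op)
        (FreeGroup.of x * FreeGroup.of y * (FreeGroup.of y * FreeGroup.of (op x y))⁻¹) = 1 :=
      (QuotientGroup.eq_one_iff _).mpr (Subgroup.subset_normalClosure ⟨x, y, rfl⟩)
    rw [map_mul, map_inv, map_mul] at h1
    exact mul_inv_eq_one.mp h1
  have hconjG : ∀ x y, ι (op x y) = (ι y)⁻¹ * ι x * ι y := by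
    intro x y
    rw [mul_assoc]
    exact eq_inv_mul_iff_mul_eq.mpr (hrel x y).symm
  -- direction: any conjugation embedding gives injectivity
  have hback : (∃ (H : Type) (_ : Group H) (f : X → H),
      Function.Injective f ∧ ∀ x y, f (op x y) = (f y)⁻¹ * f x * f y) →
      Function.Injective ι := by
    rintro ⟨H, _, f, hfinj, hfconj⟩
    have hrels : ∀ r ∈ rackRels op, FreeGroup.lift f r = 1 := by
      rintro r ⟨x, y, rfl⟩
      simp only [map_mul, map_inv, FreeGroup.lift_apply_of]
      rw [mul_inv_eq_one, hfconj]
      group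
    have hcomp : ∀ x, PresentedGroup.toGroup hrels (ι x) = f x := fun x =>
      PresentedGroup.toGroup.of hrels
    intro x y hxy
    apply hfinj
    rw [← hcomp x, ← hcomp y, hxy]
  -- the permutation representation
  obtain ⟨σ, hσ⟩ : ∃ σ : X → Equiv.Perm X, ∀ y z, σ y z = op z y :=
    ⟨fun y => Equiv.ofBijective _ (hbij y), fun _ _ => rfl⟩
  have hσmul : ∀ x y, σ y * σ x = σ (op x y) * σ y := by
    intro x y
    ext z
    simp only [Equiv.Perm.mul_apply, hσ]
    exact hsd z x y
  have hrelsφ : ∀ r ∈ rackRels op,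
      FreeGroup.lift (fun x => MulOpposite.op (σ x)) r = 1 := by
    rintro r ⟨x, y, rfl⟩
    simp only [map_mul, map_inv, FreeGroup.lift_apply_of]
    rw [mul_inv_eq_one, ← MulOpposite.op_mul, ← MulOpposite.op_mul]
    exact congrArg MulOpposite.op (hσmul x y)
  obtain ⟨φ, hφ⟩ : ∃ φ : RackGroup op →* (Equiv.Perm X)ᵐᵒᵖ,
      ∀ x, φ (ι x) = MulOpposite.op (σ x) :=
    ⟨PresentedGroup.toGroup hrelsφ, fun x => PresentedGroup.toGroup.of hrelsφ⟩
  -- the key conjugation-action identity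
  have hact : ∀ g : RackGroup op, ∀ x, ι ((φ g).unop x) = g⁻¹ * ι x * g := by
    have key : ∀ g : RackGroup op, g ∈ Subgroup.closure (Set.range ι) →
        ∀ x, ι ((φ g).unop x) = g⁻¹ * ι x * g := by
      intro g hg
      induction hg using Subgroup.closure_induction with
      | mem g hgr =>
        obtain ⟨y, rfl⟩ := hgr
        intro x
        rw [hφ y]
        simp only [MulOpposite.unop_op]
        rw [hσ y x]
        exact hconjG x y
      | one => intro x; simp
      | mul g h hgc hhc hg hh =>
        intro x
        rw [map_mul]
        have hunop : ((φ g * φ h).unop : Equiv.Perm X) x = (φ h).unop ((φ g).unop x) := by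
          simp [MulOpposite.unop_mul, Equiv.Perm.mul_apply]
        rw [hunop, hh, hg, mul_inv_rev]
        group
      | inv g hgc hg =>
        intro x
        have h1 := hg ((φ g⁻¹).unop x)
        have h2 : (φ g).unop ((φ g⁻¹).unop x) = x := by
          rw [map_inv]
          simp [MulOpposite.unop_inv]
        rw [h2] at h1
        rw [inv_inv]
        rw [h1]
        group
    intro g
    exact key g (by rw [hι, PresentedGroup.closure_range_of]; trivial)
  -- kernel of φ is central
  have hKcent : ∀ g ∈ φ.ker, ∀ h : RackGroup op, g * h = h * g := by
    intro g hgk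
    have hcomm : ∀ x, g * ι x = ι x * g := by
      intro x
      have := hact g x
      rw [MonoidHom.mem_ker.mp hgk] at this
      simp only [MulOpposite.unop_one, Equiv.Perm.coe_one, id_eq] at this
      calc g * ι x = g * (g⁻¹ * ι x * g) := by rw [← this]
        _ = ι x * g := by group
    intro h
    have hh : h ∈ Subgroup.closure (Set.range ι) := by
      rw [hι, PresentedGroup.closure_range_of]; trivial
    induction hh using Subgroup.closure_induction with
    | mem y hy => obtain ⟨x, rfl⟩ := hy; exact hcomm x
    | one => simp
    | mul a b hac hbc ha hb => rw [← mul_assoc, ha, mul_assoc, hb, mul_assoc]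
    | inv a hac ha =>
      calc g * a⁻¹ = a⁻¹ * (a * g) * a⁻¹ := by group
        _ = a⁻¹ * (g * a) * a⁻¹ := by rw [ha]
        _ = a⁻¹ * g := by group
  -- finite generation
  have hFG : Group.FG (RackGroup op) := by
    rw [Group.fg_iff]
    exact ⟨Set.range ι, by rw [hι, PresentedGroup.closure_range_of], Set.finite_range ι⟩
  -- the kernel has finite index
  haveI hPfin : Finite ((Equiv.Perm X)ᵐᵒᵖ) := Finite.of_equiv _ MulOpposite.opEquiv
  set K := φ.ker with hK
  have hQfin : Finite (RackGroup op ⧸ K) := by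
    have e := QuotientGroup.quotientKerEquivRange φ
    exact Finite.of_equiv _ e.symm.toEquiv
  haveI : K.FiniteIndex := Subgroup.finiteIndex_of_finite_quotient (H := K)
  -- K is a finitely generated abelian group
  haveI : Group.FG (RackGroup op) := hFG
  haveI hKFG : Group.FG ↥K := Subgroup.fg_of_index_ne_zero K
  letI instKcomm : CommGroup ↥K :=
    { (inferInstance : Group ↥K) with
      mul_comm := fun a b => Subtype.ext (hKcent a.1 a.2 b.1) }
  -- separation of nontrivial elements by finite quotients
  have hsep : ∀ d : RackGroup op, d ≠ 1 → ∃ (Q : Type _) (_ : Group Q) (_ : Finite Q)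
      (ψ : RackGroup op →* Q), ψ d ≠ 1 := by
    intro d hd
    by_cases hdK : d ∈ K
    · -- central case: use residual finiteness of f.g. abelian groups
      letI : AddCommGroup (Additive ↥K) := inferInstance
      haveI : AddGroup.FG (Additive ↥K) := GroupFG.iff_add_fg.mp hKFG
      haveI : Module.Finite ℤ (Additive ↥K) := Module.Finite.iff_addGroup_fg.mpr inferInstance
      set a : Additive ↥K := Additive.ofMul (⟨d, hdK⟩ : ↥K) with ha
      have ha0 : a ≠ 0 := by
        simp only [ha, ne_eq]
        intro h
        apply hd
        have : (⟨d, hdK⟩ : ↥K) = 1 := h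
        exact congrArg Subtype.val this
      obtain ⟨B, hBfin, haB⟩ := resid a ha0
      set ψ₀ : ↥K →* Multiplicative (Additive ↥K ⧸ B) :=
        { toFun := fun k => Multiplicative.ofAdd (Submodule.Quotient.mk (Additive.ofMul k))
          map_one' := by simp
          map_mul' := fun k₁ k₂ => by
            simp only [← ofAdd_add, ← Submodule.Quotient.mk_add]
            rfl } with hψ₀
      set M := ψ₀.ker with hM
      have hdM : (⟨d, hdK⟩ : ↥K) ∉ M := by
        intro hmem
        apply haB
        have : ψ₀ ⟨d, hdK⟩ = 1 := hmem
        have h2 : Submodule.Quotient.mk (p := B) a = 0 := this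
        exact (Submodule.Quotient.mk_eq_zero B).mp h2
      have hMQfin : Finite (↥K ⧸ M) := by
        have e := QuotientGroup.quotientKerEquivRange ψ₀
        haveI : Finite (Multiplicative (Additive ↥K ⧸ B)) := hBfin
        exact Finite.of_equiv _ e.symm.toEquiv
      set N := Subgroup.map K.subtype M with hN
      have hNK : N ≤ K := by
        rintro n ⟨k, _, rfl⟩
        exact k.2
      haveI hNnormal : N.Normal := by
        constructor
        intro n hn g
        have hcent : ∀ h : RackGroup op, n * h = h * n := hKcent n (hNK hn)
        have : g * n * g⁻¹ = n := by rw [← hcent g]; group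
        rw [this]; exact hn
      have hdN : d ∉ N := by
        rintro ⟨k, hkM, hk⟩
        apply hdM
        have : k = ⟨d, hdK⟩ := Subtype.ext hk
        rwa [this] at hkM
      have hNidx : N.index ≠ 0 := by
        rw [← Subgroup.relIndex_mul_index hNK]
        have h1 : N.relIndex K = M.index := by
          rw [Subgroup.relIndex]
          congr 1
          rw [hN, Subgroup.subgroupOf, Subgroup.comap_map_eq_self_of_injective K.subtype_injective]
        rw [h1]
        exact Nat.mul_ne_zero (Subgroup.index_ne_zero_of_finite)
          (Subgroup.index_ne_zero_of_finite)
      haveI : N.FiniteIndex := ⟨hNidx⟩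
      refine ⟨RackGroup op ⧸ N, inferInstance, inferInstance, QuotientGroup.mk' N, ?_⟩
      rw [ne_eq, QuotientGroup.mk'_apply, QuotientGroup.eq_one_iff]
      exact hdN
    · exact ⟨(Equiv.Perm X)ᵐᵒᵖ, inferInstance, inferInstance, φ,
        fun h => hdK (MonoidHom.mem_ker.mpr h)⟩
  -- forward direction: injectivity gives a finite conjugation embedding
  have hfwd : Function.Injective ι → ∃ (H : Type) (_ : Group H) (_ : Finite H) (f : X → H),
      Function.Injective f ∧ ∀ x y, f (op x y) = (f y)⁻¹ * f x * f y := by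
    intro hinj
    have hpair : ∀ p : X × X, ∃ (Q : Type _) (_ : Group Q) (_ : Finite Q)
        (ψ : RackGroup op →* Q), ι p.1 ≠ ι p.2 → ψ (ι p.1) ≠ ψ (ι p.2) := by
      intro p
      by_cases hp : ι p.1 = ι p.2
      · exact ⟨ULift Unit, inferInstance, inferInstance, 1, fun h => absurd hp h⟩
      · have hd : ι p.1 * (ι p.2)⁻¹ ≠ 1 := by
          rw [ne_eq, mul_inv_eq_one]; exact hp
        obtain ⟨Q, iQ, fQ, ψ, hψ⟩ := hsep _ hd
        refine ⟨Q, iQ, fQ, ψ, fun _ h => hψ ?_⟩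
        rw [map_mul, map_inv, h]
        group
    choose Q iQ fQ ψ hψ using hpair
    letI : ∀ p, Group (Q p) := iQ
    haveI : ∀ p, Finite (Q p) := fQ
    set H₁ := ∀ p, Q p with hH₁
    haveI : Finite H₁ := by infer_instance
    set F : X → H₁ := fun x p => ψ p (ι x) with hF
    have hFinj : Function.Injective F := by
      intro x y h
      by_contra hxy
      have hιne : ι x ≠ ι y := fun he => hxy (hinj he)
      exact hψ (x, y) hιne (congrFun h (x, y))
    have hFconj : ∀ x y, F (op x y) = (F y)⁻¹ * F x * F y := by
      intro x y
      funext p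
      show ψ p (ι (op x y)) = (ψ p (ι y))⁻¹ * ψ p (ι x) * ψ p (ι y)
      rw [← map_inv, ← map_mul, ← map_mul]
      exact congrArg (ψ p) (hconjG x y)
    obtain ⟨n, ⟨e⟩⟩ := Finite.exists_equiv_fin H₁
    set Φ₁ : H₁ →* Equiv.Perm H₁ := MulAction.toPermHom H₁ H₁ with hΦ₁
    have hΦ₁inj : Function.Injective Φ₁ := MulAction.toPerm_injective
    set Φ₂ : Equiv.Perm H₁ →* Equiv.Perm (Fin n) :=
      { toFun := fun p => e.permCongr p
        map_one' := by ext z; simp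
        map_mul' := fun p q => by
          ext z
          simp [Equiv.permCongr_apply, Equiv.Perm.mul_apply] } with hΦ₂
    have hΦ₂inj : Function.Injective Φ₂ := fun p q h => e.permCongr.injective h
    set Φ : H₁ →* Equiv.Perm (Fin n) := Φ₂.comp Φ₁ with hΦ
    have hΦinj : Function.Injective Φ := fun p q h => hΦ₁inj (hΦ₂inj h)
    refine ⟨Equiv.Perm (Fin n), inferInstance, inferInstance, fun x => Φ (F x), ?_, ?_⟩
    · intro x y h
      exact hFinj (hΦinj h)
    · intro x y
      show Φ (F (op x y)) = (Φ (F y))⁻¹ * Φ (F x) * Φ (F y)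
      rw [hFconj x y, map_mul, map_mul, map_inv]
  exact ⟨⟨hfwd, fun ⟨H, iH, _, f, h1, h2⟩ => hback ⟨H, iH, f, h1, h2⟩⟩,
    ⟨fun h => by obtain ⟨H, iH, _, f, h1, h2⟩ := hfwd h; exact ⟨H, iH, f, h1, h2⟩, hback⟩⟩
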